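/- arXiv:0911.5650 — 4 statements merged into one kernel-verified Lean document; each statement's English description precedes it below -/
import Mathlib

section
/- Let d ≥ 1 and let m = (m_1,…,m_d) ∈ ℕ^d be such that every component m_i is odd. Set N = ∏_{i=1}^d m_i. Then there exists a bijection ĥ_m : {1,…,N} → {1,…,m_1} × ⋯ × {1,…,m_d} such that ∑_{i=1}^d |ĥ_m(j+1)_i − ĥ_m(j)_i| = 1 for every j = 1,…,N−1, ĥ_m(1) = (1,…,1), and ĥ_m(N) = m. -/
lemma snake_aux : ∀ (n : ℕ) (m : Fin (n+1) → ℕ), (∀ i, Odd (m i)) →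
    ∃ h : ℕ → (Fin (n+1) → ℕ),
      Set.BijOn h (Set.Icc 1 (∏ i, m i)) {k | ∀ i, k i ∈ Set.Icc 1 (m i)} ∧
      (∀ j : ℕ, 1 ≤ j → j + 1 ≤ ∏ i, m i →
        ∑ i : Fin (n+1), |((h (j + 1) i : ℤ) - (h j i : ℤ))| = 1) ∧
      h 1 = (fun _ => 1) ∧ h (∏ i, m i) = m := by
  intro n
  induction n with
  | zero =>
    intro m hm
    refine ⟨fun j _ => j, ⟨?_, ?_, ?_⟩, ?_, ?_, ?_⟩
    · intro j hj i
      rw [Fin.prod_univ_one] at hj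
      have hi : i = 0 := Fin.fin_one_eq_zero i
      simpa [hi] using hj
    · intro a _ b _ hab
      exact congrFun hab 0
    · intro k hk
      have hk0 := hk 0
      rw [Fin.prod_univ_one]
      refine ⟨k 0, hk0, funext fun i => ?_⟩
      rw [Fin.fin_one_eq_zero i]
    · intro j hj _
      rw [Fin.sum_univ_one]
      push_cast
      simp
    · rfl
    · rw [Fin.prod_univ_one]
      funext i
      rw [Fin.fin_one_eq_zero i]
  | succ e ih =>
    intro m hm
    obtain ⟨h', ⟨hmap, hinj, hsur⟩, hadj, h1, hNlast⟩ :=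
      ih (fun i => m i.succ) (fun i => hm i.succ)
    set P := ∏ i : Fin (e+1), m (Fin.succ i) with hPdef
    have hP1 : 1 ≤ P := Finset.one_le_prod' (fun i _ => (hm i.succ).pos)
    have hprod : ∏ i, m i = m 0 * P := Fin.prod_univ_succ m
    have hm0 : 1 ≤ m 0 := (hm 0).pos
    set pos : ℕ → ℕ :=
      fun j => if ((j-1)/P) % 2 = 0 then (j-1) % P + 1 else P - (j-1) % P with hposdef
    have hposmem : ∀ j, pos j ∈ Set.Icc 1 P := by
      intro j
      have hr : (j-1) % P < P := Nat.mod_lt _ hP1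
      simp only [hposdef]
      split <;> simp only [Set.mem_Icc] <;> omega
    refine ⟨fun j => Fin.cases ((j-1)/P + 1) (fun i => h' (pos j) i), ⟨?_, ?_, ?_⟩, ?_, ?_, ?_⟩
    · -- MapsTo
      intro j hj
      rw [hprod] at hj
      simp only [Set.mem_Icc] at hj
      intro i
      refine Fin.cases ?_ (fun i' => ?_) i
      · simp only [Fin.cases_zero, Set.mem_Icc]
        have hlt : (j-1)/P < m 0 := by
          rw [Nat.div_lt_iff_lt_mul hP1]
          omega
        exact ⟨Nat.succ_le_succ (Nat.zero_le _), Nat.succ_le_of_lt hlt⟩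
      · simp only [Fin.cases_succ]
        exact hmap (hposmem j) i'
    · -- InjOn
      intro a ha b hb hab
      simp only [Set.mem_Icc] at ha hb
      have h0 := congrFun hab 0
      simp only [Fin.cases_zero] at h0
      have hq : (a-1)/P = (b-1)/P := Nat.succ_injective h0

      have hs : h' (pos a) = h' (pos b) := by
        funext i
        have := congrFun hab i.succ
        simpa only [Fin.cases_succ] using this
      have hpe : pos a = pos b := hinj (hposmem a) (hposmem b) hs
      have hra : (a-1) % P < P := Nat.mod_lt _ hP1
      have hrb : (b-1) % P < P := Nat.mod_lt _ hP1
      simp only [hposdef, hq] at hpe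
      have hre : (a-1) % P = (b-1) % P := by split_ifs at hpe <;> omega
      have hab' : a - 1 = b - 1 := by
        conv_lhs => rw [← Nat.div_add_mod (a-1) P]
        rw [hq, hre, Nat.div_add_mod]
      omega
    · -- SurjOn
      intro k hk
      have hk0 : k 0 ∈ Set.Icc 1 (m 0) := hk 0
      simp only [Set.mem_Icc] at hk0
      have hk' : (fun i => k (Fin.succ i)) ∈ {k' | ∀ i, k' i ∈ Set.Icc 1 (m (Fin.succ i))} :=
        fun i => hk i.succ
      obtain ⟨b, hbmem, hbeq⟩ := hsur hk'
      simp only [Set.mem_Icc] at hbmem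
      set c := if (k 0 - 1) % 2 = 0 then b else P + 1 - b with hcdef
      have hc : 1 ≤ c ∧ c ≤ P := by
        simp only [hcdef]; split <;> omega
      set j := (k 0 - 1) * P + c with hjdef
      have hj1 : j - 1 = (c - 1) + (k 0 - 1) * P := by omega
      have hq : (j-1)/P = k 0 - 1 := by
        rw [hj1, Nat.add_mul_div_right _ _ hP1, Nat.div_eq_of_lt (by omega)]
        omega
      have hrr : (j-1) % P = c - 1 := by
        rw [hj1, Nat.add_mul_mod_self_right, Nat.mod_eq_of_lt (by omega)]
      have hposj : pos j = b := by
        simp only [hposdef, hq, hrr, hcdef]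
        split_ifs <;> omega
      refine ⟨j, ?_, ?_⟩
      · simp only [Set.mem_Icc, hprod]
        constructor
        · omega
        · have : (k 0 - 1) * P ≤ (m 0 - 1) * P := Nat.mul_le_mul_right _ (by omega)
          have : (m 0 - 1) * P + P = m 0 * P := by
            have := Nat.succ_pred_eq_of_pos hm0
            nlinarith [Nat.sub_add_cancel hm0]
          omega
      · funext i
        refine Fin.cases ?_ (fun i' => ?_) i
        · simp only [Fin.cases_zero, hq]; omega
        · simp only [Fin.cases_succ, hposj]
          exact congrFun hbeq i'
    · -- adjacency
      intro j hj1 hjN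
      rw [hprod] at hjN
      have hdm := Nat.div_add_mod (j-1) P
      have hr : (j-1) % P < P := Nat.mod_lt _ hP1
      set q := (j-1)/P with hqdef
      set r := (j-1) % P with hrdef
      rw [Fin.sum_univ_succ]
      by_cases hcase : r + 1 < P
      · -- same layer
        have hjeq : j = (r + 1) + q * P := by rw [Nat.mul_comm]; omega
        have hq' : ((j+1)-1)/P = q := by
          simp only [Nat.add_sub_cancel]
          rw (occs := .pos [1]) [hjeq]
          rw [Nat.add_mul_div_right _ _ hP1, Nat.div_eq_of_lt (by omega)]
          omega
        have hr' : ((j+1)-1) % P = r + 1 := by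
          simp only [Nat.add_sub_cancel]
          rw (occs := .pos [1]) [hjeq]
          rw [Nat.add_mul_mod_self_right, Nat.mod_eq_of_lt (by omega)]
        have hcoord0 : |((Fin.cases (((j+1)-1)/P + 1) (fun i => h' (pos (j+1)) i) (0 : Fin (e+2)) : ℕ) : ℤ)
            - ((Fin.cases ((j-1)/P + 1) (fun i => h' (pos j) i) (0 : Fin (e+2)) : ℕ) : ℤ)| = 0 := by
          simp only [Fin.cases_zero, hq', ← hqdef]
          simp
        rw [hcoord0]
        simp only [Fin.cases_succ]
        rw [zero_add]
        by_cases hpar : q % 2 = 0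
        · have hpj : pos j = r + 1 := by simp [hposdef, ← hqdef, ← hrdef, hpar]
          have hpj' : pos (j+1) = r + 2 := by
            simp only [hposdef, hq', hr', hpar, if_pos]
          rw [hpj, hpj']
          have := hadj (r+1) (by omega) (by omega)
          simpa using this
        · have hpj : pos j = P - r := by simp [hposdef, ← hqdef, ← hrdef, hpar]
          have hpj' : pos (j+1) = P - (r+1) := by
            simp only [hposdef, hq', hr']
            rw [if_neg hpar]
          rw [hpj, hpj']
          have key := hadj (P - (r+1)) (by omega) (by omega)
          have hPr : P - (r+1) + 1 = P - r := by omega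
          rw [hPr] at key
          rw [← key]
          apply Finset.sum_congr rfl
          intro i _
          rw [abs_sub_comm]
      · -- layer boundary
        have hrP : r = P - 1 := by omega
        have hjeq : j = P + q * P := by rw [Nat.mul_comm]; omega
        have hq' : ((j+1)-1)/P = q + 1 := by
          simp only [Nat.add_sub_cancel]
          rw (occs := .pos [1]) [hjeq]
          rw [Nat.add_mul_div_right _ _ hP1, Nat.div_self hP1]
          omega
        have hr' : ((j+1)-1) % P = 0 := by
          simp only [Nat.add_sub_cancel]
          rw (occs := .pos [1]) [hjeq]
          rw [Nat.add_mul_mod_self_right, Nat.mod_self]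
        have hpeq : pos (j+1) = pos j := by
          simp only [hposdef, hq', hr', ← hqdef, ← hrdef, hrP]
          by_cases hpar : q % 2 = 0
          · have : (q+1) % 2 ≠ 0 := by omega
            rw [if_neg this, if_pos hpar]
            omega
          · have : (q+1) % 2 = 0 := by omega
            rw [if_pos this, if_neg hpar]
            omega
        have hcoord0 : |((Fin.cases (((j+1)-1)/P + 1) (fun i => h' (pos (j+1)) i) (0 : Fin (e+2)) : ℕ) : ℤ)
            - ((Fin.cases ((j-1)/P + 1) (fun i => h' (pos j) i) (0 : Fin (e+2)) : ℕ) : ℤ)| = 1 := by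
          simp only [Fin.cases_zero, hq', ← hqdef]
          push_cast
          ring_nf
          simp
        rw [hcoord0]
        simp only [Fin.cases_succ, hpeq]
        simp
    · -- h 1
      funext i
      refine Fin.cases ?_ (fun i' => ?_) i
      · simp [Nat.zero_div]
      · simp only [Fin.cases_succ]
        have hp1 : pos 1 = 1 := by simp [hposdef]
        rw [hp1]
        exact congrFun h1 i'
    · -- h N
      rw [hprod]
      have hPle : P ≤ m 0 * P := Nat.le_mul_of_pos_left P hm0
      have hsplit : m 0 * P - 1 = (P - 1) + (m 0 - 1) * P := by
        rw [Nat.sub_one_mul]; omega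
      have hNq : (m 0 * P - 1)/P = m 0 - 1 := by
        rw [hsplit, Nat.add_mul_div_right _ _ hP1, Nat.div_eq_of_lt (by omega)]
        omega
      have hNr : (m 0 * P - 1) % P = P - 1 := by
        rw [hsplit, Nat.add_mul_mod_self_right, Nat.mod_eq_of_lt (by omega)]
      have hpar : (m 0 - 1) % 2 = 0 := by
        obtain ⟨t, ht⟩ := hm 0
        omega
      have hposN : pos (m 0 * P) = P := by
        simp only [hposdef, hNq, hNr, hpar, if_pos]
        omega
      funext i
      refine Fin.cases ?_ (fun i' => ?_) i
      · simp only [Fin.cases_zero, hNq]; omega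
      · simp only [Fin.cases_succ, hposN]
        exact congrFun hNlast i'

/-- Finite snake: if all components of `m ∈ ℕ^d` are odd and `N = ∏ m i`, there is a
bijection `h` from `{1,…,N}` onto `{1,…,m_1} × ⋯ × {1,…,m_d}` such that consecutive
values are grid-adjacent, `h 1 = (1,…,1)` and `h N = m`. -/
theorem stmt1 (d : ℕ) (hd : 1 ≤ d) (m : Fin d → ℕ) (hm : ∀ i, Odd (m i)) :
    ∃ h : ℕ → (Fin d → ℕ),
      Set.BijOn h (Set.Icc 1 (∏ i, m i)) {k | ∀ i, k i ∈ Set.Icc 1 (m i)} ∧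
      (∀ j : ℕ, 1 ≤ j → j + 1 ≤ ∏ i, m i →
        ∑ i : Fin d, |((h (j + 1) i : ℤ) - (h j i : ℤ))| = 1) ∧
      h 1 = (fun _ => 1) ∧ h (∏ i, m i) = m := by
  obtain ⟨e, rfl⟩ : ∃ e, d = e + 1 := ⟨d - 1, by omega⟩
  exact snake_aux e m hm
end

section
/- Let d ≥ 1, let m = (m_1,…,m_d) ∈ ℕ^d have all components odd, set N = ∏_{i=1}^d m_i, and let p ∈ {1,…,d}. Define m̄ = (m_1,…,m_{p−1}, m_p+2, m_{p+1},…,m_d) and N̄ = ∏_{i=1}^d m̄_i. Then every bijection ĥ_m : {1,…,N} → {1,…,m_1} × ⋯ × {1,…,m_d} satisfying ∑_i |ĥ_m(j+1)_i − ĥ_m(j)_i| = 1 for all j = 1,…,N−1, ĥ_m(1) = (1,…,1) and ĥ_m(N) = m, can be extended to a bijection ĥ_{m̄} : {1,…,N̄} → {1,…,m̄_1} × ⋯ × {1,…,m̄_d} satisfying ∑_i |ĥ_{m̄}(j+1)_i − ĥ_{m̄}(j)_i| = 1 for all j = 1,…,N̄−1, ĥ_{m̄}(1) = (1,…,1), ĥ_{m̄}(N̄)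 = m̄, and ĥ_{m̄}(j) = ĥ_m(j) for all j = 1,…,N. -/
private theorem insertNth_self_aux {n : ℕ} (p : Fin (n+1)) (f : Fin (n+1) → ℕ) :
    p.insertNth (f p) (fun i => f (p.succAbove i)) = f :=
  Fin.insertNth_self_removeNth p f


private theorem snake_exists_aux : ∀ (n : ℕ) (m : Fin n → ℕ), (∀ i, Odd (m i)) →
    ∃ g : ℕ → Fin n → ℕ,
      Set.BijOn g (Set.Icc 1 (∏ i, m i)) {k | ∀ i, k i ∈ Set.Icc 1 (m i)} ∧
      (∀ j : ℕ, 1 ≤ j → j + 1 ≤ ∏ i, m i →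
        ∑ i : Fin n, |((g (j + 1) i : ℤ) - (g j i : ℤ))| = 1) ∧
      g 1 = (fun _ => 1) ∧ g (∏ i, m i) = m := by
  intro n
  induction n with
  | zero =>
    intro m hm
    refine ⟨fun _ => fun i => i.elim0, ⟨?_, ?_, ?_⟩, ?_, ?_, ?_⟩
    · intro j _ i; exact i.elim0
    · intro a _ b _ _; simp at *; omega
    · intro k _
      refine ⟨1, by simp, funext fun i => i.elim0⟩
    · intro j h1 h2; simp at h2; omega
    · exact funext fun i => i.elim0
    · exact funext fun i => i.elim0
  | succ n ih =>
    intro m hm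
    set m' : Fin n → ℕ := fun i => m i.castSucc with hm'def
    set M : ℕ := m (Fin.last n) with hMdef
    obtain ⟨g, ⟨gmap, ginj, gsur⟩, gadj, gstart, gend⟩ := ih m' (fun i => hm _)
    set Q : ℕ := ∏ i, m' i with hQdef
    have hQpos : 0 < Q := Finset.prod_pos (fun i _ => (hm _).pos)
    have hMpos : 0 < M := (hm _).pos
    have hprod : ∏ i, m i = Q * M := Fin.prod_univ_castSucc m
    -- the snake
    set inner : ℕ → ℕ → (Fin n → ℕ) :=
      fun q r => if Even q then g (r + 1) else g (Q - r) with hinner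
    set G : ℕ → Fin (n+1) → ℕ :=
      fun j => Fin.snoc (inner ((j-1)/Q) ((j-1)%Q)) ((j-1)/Q + 1) with hG
    have Gapp : ∀ q r, r < Q → G (Q * q + r + 1) = Fin.snoc (inner q r) (q + 1) := by
      intro q r hr
      have h1 : (Q * q + r + 1 - 1) = r + Q * q := by omega
      have hdiv : (r + Q * q) / Q = q := by
        rw [Nat.add_mul_div_left _ _ hQpos, Nat.div_eq_of_lt hr]; omega
      have hmod : (r + Q * q) % Q = r := by
        rw [Nat.add_mul_mod_self_left, Nat.mod_eq_of_lt hr]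
      simp only [hG, h1, hdiv, hmod]
    have innerMem : ∀ q r, r < Q → ∀ i, inner q r i ∈ Set.Icc 1 (m' i) := by
      intro q r hr i
      have h1 : (r + 1) ∈ Set.Icc 1 Q := by constructor <;> omega
      have h2 : (Q - r) ∈ Set.Icc 1 Q := by constructor <;> omega
      by_cases hq : Even q
      · simp only [hinner]; rw [if_pos hq]; exact gmap h1 i
      · simp only [hinner]; rw [if_neg hq]; exact gmap h2 i
    have jdecomp : ∀ j, 1 ≤ j → j ≤ Q * M →
        ∃ q r, r < Q ∧ q < M ∧ j = Q * q + r + 1 := by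
      intro j h1 h2
      refine ⟨(j-1)/Q, (j-1)%Q, Nat.mod_lt _ hQpos, ?_, ?_⟩
      · have : (j-1)/Q < M := Nat.div_lt_of_lt_mul (by omega)
        exact this
      · have := Nat.div_add_mod (j-1) Q; omega
    refine ⟨G, ⟨?_, ?_, ?_⟩, ?_, ?_, ?_⟩
    · -- MapsTo
      rw [hprod]
      rintro j ⟨h1, h2⟩
      obtain ⟨q, r, hr, hq, rfl⟩ := jdecomp j h1 h2
      rw [Gapp q r hr]
      intro i
      refine Fin.lastCases ?_ ?_ i
      · simp only [Fin.snoc_last]; constructor <;> omega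
      · intro i; simp only [Fin.snoc_castSucc]; exact innerMem q r hr i
    · -- InjOn
      rw [hprod]
      rintro a ⟨ha1, ha2⟩ b ⟨hb1, hb2⟩ hab
      obtain ⟨qa, ra, hra, hqa, rfl⟩ := jdecomp a ha1 ha2
      obtain ⟨qb, rb, hrb, hqb, rfl⟩ := jdecomp b hb1 hb2
      rw [Gapp _ _ hra, Gapp _ _ hrb] at hab
      have hlast : qa = qb := by
        have := congrFun hab (Fin.last n)
        simpa using this
      subst hlast
      have hin : inner qa ra = inner qa rb := by
        funext i
        have := congrFun hab i.castSucc
        simpa using this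
      have hr : ra = rb := by
        by_cases hq : Even qa
        · simp only [hinner] at hin; rw [if_pos hq, if_pos hq] at hin
          have := ginj ⟨by omega, by omega⟩ ⟨by omega, by omega⟩ hin
          omega
        · simp only [hinner] at hin; rw [if_neg hq, if_neg hq] at hin
          have := ginj ⟨by omega, by omega⟩ ⟨by omega, by omega⟩ hin
          omega
      omega
    · -- SurjOn
      rw [hprod]
      intro k hk
      obtain ⟨hl1, hl2⟩ : k (Fin.last n) ∈ Set.Icc 1 M := hk (Fin.last n)
      have hv : (Fin.init k) ∈ {k | ∀ i, k i ∈ Set.Icc 1 (m' i)} := fun i => hk i.castSucc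
      obtain ⟨t, ⟨ht1, ht2⟩, htv⟩ := gsur hv
      set q := k (Fin.last n) - 1 with hqdef
      have hqM : q < M := by omega
      have key : ∃ r, r < Q ∧ inner q r = Fin.init k := by
        by_cases hq : Even q
        · exact ⟨t - 1, by omega, by
            simp only [hinner]; rw [if_pos hq]
            rw [show t - 1 + 1 = t by omega]; exact htv⟩
        · exact ⟨Q - t, by omega, by
            simp only [hinner]; rw [if_neg hq]
            rw [show Q - (Q - t) = t by omega]; exact htv⟩
      obtain ⟨r, hr, hir⟩ := key
      refine ⟨Q * q + r + 1, ⟨by omega, ?_⟩, ?_⟩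
      · have e1 : Q * (q + 1) = Q * q + Q := by ring
        have e2 : Q * (q + 1) ≤ Q * M := Nat.mul_le_mul_left _ (by omega)
        omega
      · rw [Gapp q r hr, hir, show q + 1 = k (Fin.last n) by omega]
        exact Fin.snoc_init_self k
    · -- adjacency
      rw [hprod]
      intro j h1 h2
      obtain ⟨q, r, hr, hq, hj⟩ := jdecomp j h1 (by omega)
      by_cases hcase : r + 1 < Q
      · -- same layer
        have hj1 : j + 1 = Q * q + (r + 1) + 1 := by omega
        rw [hj1, hj, Gapp q r hr, Gapp q (r+1) hcase]
        rw [Fin.sum_univ_castSucc]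
        simp only [Fin.snoc_castSucc, Fin.snoc_last]
        rw [sub_self, abs_zero, add_zero]
        by_cases hqe : Even q
        · simp only [hinner]; rw [if_pos hqe, if_pos hqe]
          exact gadj (r + 1) (by omega) (by omega)
        · simp only [hinner]; rw [if_neg hqe, if_neg hqe]
          rw [show Q - (r + 1) = (Q - r) - 1 by omega]
          have := gadj (Q - r - 1) (by omega) (by
            have : Q - r - 1 + 1 = Q - r := by omega
            omega)
          rw [show Q - r - 1 + 1 = Q - r by omega] at this
          rw [← this]
          exact Finset.sum_congr rfl fun i _ => abs_sub_comm _ _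
      · -- layer change
        have hrQ : r + 1 = Q := by omega
        have e1 : Q * (q + 1) = Q * q + Q := by ring
        have hj1 : j + 1 = Q * (q + 1) + 0 + 1 := by omega
        have hqM : q + 1 < M := by
          rcases Nat.lt_or_ge (q+1) M with hlt | hge
          · exact hlt
          · exfalso
            have : Q * M ≤ Q * (q + 1) := Nat.mul_le_mul_left _ hge
            omega
        rw [hj1, hj, Gapp q r hr, Gapp (q+1) 0 hQpos]
        rw [Fin.sum_univ_castSucc]
        simp only [Fin.snoc_castSucc, Fin.snoc_last]
        have hsame : inner (q+1) 0 = inner q r := by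
          by_cases hqe : Even q
          · have h2 : ¬ Even (q + 1) := by simp [Nat.even_add_one, hqe]
            simp only [hinner]; rw [if_neg h2, if_pos hqe]
            rw [Nat.sub_zero, show r + 1 = Q from hrQ]
          · have h2 : Even (q + 1) := by simp [Nat.even_add_one, hqe]
            simp only [hinner]; rw [if_pos h2, if_neg hqe]
            rw [show Q - r = 1 by omega]
        rw [hsame]
        simp only [sub_self, abs_zero, Finset.sum_const_zero, zero_add]
        push_cast
        rw [show ((q:ℤ) + 1 + 1 - (q + 1)) = 1 by ring]
        exact abs_one
    · -- start
      have hG1 : G 1 = Fin.snoc (inner 0 0) (0 + 1) := Gapp 0 0 hQpos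
      rw [hG1]
      funext i
      refine Fin.lastCases ?_ ?_ i
      · simp
      · intro i
        simp only [Fin.snoc_castSucc, hinner]
        rw [if_pos (Even.zero)]
        rw [show (0:ℕ) + 1 = 1 from rfl, gstart]
    · -- end
      have hMeven : Even (M - 1) := Nat.Odd.sub_odd (hm _) odd_one
      have : Q * M = Q * (M - 1) + (Q - 1) + 1 := by
        have : Q * M = Q * (M - 1) + Q := by
          rw [← Nat.mul_succ]; congr 1; omega
        omega
      rw [hprod, this, Gapp (M-1) (Q-1) (by omega)]
      funext i
      refine Fin.lastCases ?_ ?_ i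
      · simp only [Fin.snoc_last]; omega
      · intro i
        simp only [Fin.snoc_castSucc, hinner]
        rw [if_pos hMeven]
        rw [show Q - 1 + 1 = Q by omega, gend]

/-- Extension of the finite snake: a snake filling `{1,…,m_1} × ⋯ × {1,…,m_d}` (all `m_i`
odd) from `(1,…,1)` to `m` extends to a snake filling the box where the `p`-th side is
enlarged by `2`, ending at `m̄ = m + 2 e_p`. -/
theorem stmt2 (d : ℕ) (hd : 1 ≤ d) (m : Fin d → ℕ) (hm : ∀ i, Odd (m i)) (p : Fin d)
    (h : ℕ → Fin d → ℕ)
    (hbij : Set.BijOn h (Set.Icc 1 (∏ i, m i)) {k | ∀ i, k i ∈ Set.Icc 1 (m i)})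
    (hadj : ∀ j : ℕ, 1 ≤ j → j + 1 ≤ ∏ i, m i →
      ∑ i : Fin d, |((h (j + 1) i : ℤ) - (h j i : ℤ))| = 1)
    (hstart : h 1 = fun _ => 1) (hend : h (∏ i, m i) = m) :
    ∃ h' : ℕ → Fin d → ℕ,
      Set.BijOn h' (Set.Icc 1 (∏ i, Function.update m p (m p + 2) i))
        {k | ∀ i, k i ∈ Set.Icc 1 (Function.update m p (m p + 2) i)} ∧
      (∀ j : ℕ, 1 ≤ j → j + 1 ≤ ∏ i, Function.update m p (m p + 2) i →
        ∑ i : Fin d, |((h' (j + 1) i : ℤ) - (h' j i : ℤ))| = 1) ∧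
      h' 1 = (fun _ => 1) ∧
      h' (∏ i, Function.update m p (m p + 2) i) = Function.update m p (m p + 2) ∧
      ∀ j ∈ Set.Icc 1 (∏ i, m i), h' j = h j := by
  obtain ⟨n, rfl⟩ : ∃ n, d = n + 1 := ⟨d - 1, by omega⟩
  set m' : Fin n → ℕ := fun i => m (p.succAbove i) with hm'def
  set N : ℕ := ∏ i, m i with hNdef
  set Q : ℕ := ∏ i, m' i with hQdef
  have hQpos : 0 < Q := Finset.prod_pos (fun i _ => (hm _).pos)
  have hNQ : N = m p * Q := Fin.prod_univ_succAbove m p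
  have hNpos : 0 < N := Finset.prod_pos (fun i _ => (hm _).pos)
  set M : Fin (n+1) → ℕ := Function.update m p (m p + 2) with hMdef
  have hMp : M p = m p + 2 := Function.update_self p _ m
  have hMs : ∀ i : Fin n, M (p.succAbove i) = m' i := fun i =>
    Function.update_of_ne (Fin.succAbove_ne p i) _ m
  have hprodM : ∏ i, M i = N + 2 * Q := by
    rw [Fin.prod_univ_succAbove M p, hMp]
    have : (∏ i : Fin n, M (p.succAbove i)) = Q := Finset.prod_congr rfl fun i _ => hMs i
    rw [this, hNQ]; ring
  obtain ⟨g, ⟨gmap, ginj, gsur⟩, gadj, gstart, gend⟩ := snake_exists_aux n m' (fun i => hm _)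
  rw [← hQdef] at gmap ginj gsur gadj gend
  set h' : ℕ → Fin (n+1) → ℕ := fun j =>
    if j ≤ N then h j
    else if j ≤ N + Q then p.insertNth (m p + 1) (g (N + Q + 1 - j))
    else p.insertNth (m p + 2) (g (j - (N + Q))) with hh'
  have hA : ∀ j, j ≤ N → h' j = h j := fun j hj => by simp only [hh', if_pos hj]
  have hB : ∀ j, N < j → j ≤ N + Q → h' j = p.insertNth (m p + 1) (g (N + Q + 1 - j)) :=
    fun j hj1 hj2 => by simp only [hh', if_neg (by omega : ¬ j ≤ N), if_pos hj2]
  have hC : ∀ j, N + Q < j → h' j = p.insertNth (m p + 2) (g (j - (N + Q))) :=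
    fun j hj => by
      simp only [hh', if_neg (by omega : ¬ j ≤ N), if_neg (by omega : ¬ j ≤ N + Q)]
  -- p-coordinate discriminates regions
  have hpA : ∀ j, 1 ≤ j → j ≤ N → h' j p ≤ m p := fun j hj1 hj2 => by
    rw [hA j hj2]; exact (hbij.1 ⟨hj1, hj2⟩ p).2
  have hpB : ∀ j, N < j → j ≤ N + Q → h' j p = m p + 1 := fun j hj1 hj2 => by
    rw [hB j hj1 hj2]; exact Fin.insertNth_apply_same p _ _
  have hpC : ∀ j, N + Q < j → h' j p = m p + 2 := fun j hj => by
    rw [hC j hj]; exact Fin.insertNth_apply_same p _ _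
  refine ⟨h', ⟨?_, ?_, ?_⟩, ?_, ?_, ?_, ?_⟩
  · -- MapsTo
    rw [hprodM]
    rintro j ⟨hj1, hj2⟩
    rcases Nat.lt_or_ge N j with hN | hN
    · rcases le_or_gt j (N + Q) with hNQ2 | hNQ2
      · rw [hB j hN hNQ2]
        intro i
        refine Fin.succAboveCases p ?_ ?_ i
        · rw [Fin.insertNth_apply_same, hMp]; constructor <;> omega
        · intro i
          rw [Fin.insertNth_apply_succAbove, hMs]
          exact gmap ⟨by omega, by omega⟩ i
      · rw [hC j hNQ2]
        intro i
        refine Fin.succAboveCases p ?_ ?_ i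
        · rw [Fin.insertNth_apply_same, hMp]; constructor <;> omega
        · intro i
          rw [Fin.insertNth_apply_succAbove, hMs]
          exact gmap ⟨by omega, by omega⟩ i
    · rw [hA j hN]
      intro i
      have := hbij.1 ⟨hj1, hN⟩ i
      have hle : m i ≤ M i := by
        rcases eq_or_ne i p with rfl | hip
        · rw [hMp]; omega
        · rw [hMdef, Function.update_of_ne hip]
      exact ⟨this.1, le_trans this.2 hle⟩
  · -- InjOn
    rw [hprodM]
    rintro a ⟨ha1, ha2⟩ b ⟨hb1, hb2⟩ hab
    have hpab : h' a p = h' b p := by rw [hab]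
    rcases Nat.lt_or_ge N a with hNa | hNa <;> rcases Nat.lt_or_ge N b with hNb | hNb
    · -- both > N
      rcases le_or_gt a (N + Q) with hQa | hQa <;> rcases le_or_gt b (N + Q) with hQb | hQb
      · -- both region B
        rw [hB a hNa hQa, hB b hNb hQb] at hab
        have hg : g (N + Q + 1 - a) = g (N + Q + 1 - b) := by
          funext i
          have := congrFun hab (p.succAbove i)
          rwa [Fin.insertNth_apply_succAbove, Fin.insertNth_apply_succAbove] at this
        have := ginj ⟨by omega, by omega⟩ ⟨by omega, by omega⟩ hg
        omega
      · rw [hpB a hNa hQa, hpC b hQb] at hpab; omega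
      · rw [hpB b hNb hQb, hpC a hQa] at hpab; omega
      · -- both region C
        rw [hC a hQa, hC b hQb] at hab
        have hg : g (a - (N + Q)) = g (b - (N + Q)) := by
          funext i
          have := congrFun hab (p.succAbove i)
          rwa [Fin.insertNth_apply_succAbove, Fin.insertNth_apply_succAbove] at this
        have := ginj ⟨by omega, by omega⟩ ⟨by omega, by omega⟩ hg
        omega
    · -- a > N ≥ b : contradiction via p-coordinate
      exfalso
      have hb' := hpA b hb1 hNb
      rcases le_or_gt a (N + Q) with hQa | hQa
      · rw [hpB a hNa hQa] at hpab; omega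
      · rw [hpC a hQa] at hpab; omega
    · exfalso
      have ha' := hpA a ha1 hNa
      rcases le_or_gt b (N + Q) with hQb | hQb
      · rw [hpB b hNb hQb] at hpab; omega
      · rw [hpC b hQb] at hpab; omega
    · -- both ≤ N
      rw [hA a hNa, hA b hNb] at hab
      exact hbij.2.1 ⟨ha1, hNa⟩ ⟨hb1, hNb⟩ hab
  · -- SurjOn
    rw [hprodM]
    intro k hk
    have hkp : k p ∈ Set.Icc 1 (M p) := hk p
    rw [hMp] at hkp
    obtain ⟨hkpa, hkpb⟩ := hkp
    rcases le_or_gt (k p) (m p) with hle | hgt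
    · -- k in original box
      have hk' : k ∈ {k | ∀ i, k i ∈ Set.Icc 1 (m i)} := by
        intro i
        rcases eq_or_ne i p with rfl | hip
        · exact ⟨hkpa, hle⟩
        · have := hk i
          rwa [hMdef, Function.update_of_ne hip] at this
      obtain ⟨j, ⟨hj1, hj2⟩, hjk⟩ := hbij.2.2 hk'
      exact ⟨j, ⟨hj1, by omega⟩, by rw [hA j hj2]; exact hjk⟩
    · have hv : (fun i => k (p.succAbove i)) ∈ {k | ∀ i, k i ∈ Set.Icc 1 (m' i)} := by
        intro i
        have := hk (p.succAbove i)
        rwa [hMs] at this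
      obtain ⟨t, ⟨ht1, ht2⟩, htv⟩ := gsur hv
      rcases le_or_gt (k p) (m p + 1) with h1 | h1
      · -- layer m p + 1
        have hkp1 : k p = m p + 1 := by omega
        refine ⟨N + Q + 1 - t, ⟨by omega, by omega⟩, ?_⟩
        rw [hB _ (by omega) (by omega)]
        rw [show N + Q + 1 - (N + Q + 1 - t) = t by omega, htv, ← hkp1]
        exact insertNth_self_aux p k
      · -- layer m p + 2
        have hkp2 : k p = m p + 2 := by omega
        refine ⟨N + Q + t, ⟨by omega, by omega⟩, ?_⟩
        rw [hC _ (by omega)]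
        rw [show N + Q + t - (N + Q) = t by omega, htv, ← hkp2]
        exact insertNth_self_aux p k
  · -- adjacency
    rw [hprodM]
    intro j hj1 hj2
    rcases Nat.lt_or_ge (j + 1) (N + 1) with hc1 | hc1
    · -- j+1 ≤ N
      rw [hA j (by omega), hA (j+1) (by omega)]
      exact hadj j hj1 (by omega)
    rcases Nat.eq_or_lt_of_le hc1 with hc2 | hc2
    · -- j = N
      have hjN : j = N := by omega
      rw [hA j (by omega), hB (j+1) (by omega) (by omega)]
      rw [show N + Q + 1 - (j + 1) = Q by omega, gend]
      rw [Fin.sum_univ_succAbove _ p]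
      rw [Fin.insertNth_apply_same]
      have hhj : h j = m := by rw [hjN]; exact hend
      rw [hhj]
      simp only [Fin.insertNth_apply_succAbove, hm'def]
      push_cast
      simp
    rcases Nat.lt_or_ge (j + 1) (N + Q) with hc3 | hc3
    · -- N < j, j + 1 < N + Q : within layer B
      rw [hB j (by omega) (by omega), hB (j+1) (by omega) (by omega)]
      rw [Fin.sum_univ_succAbove _ p]
      rw [Fin.insertNth_apply_same, Fin.insertNth_apply_same, sub_self, abs_zero, zero_add]
      have e1 : N + Q + 1 - j = (N + Q - j) + 1 := by omega
      have e2 : N + Q + 1 - (j + 1) = N + Q - j := by omega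
      rw [e1, e2]
      have := gadj (N + Q - j) (by omega) (by omega)
      rw [← this]
      refine Finset.sum_congr rfl fun i _ => ?_
      rw [Fin.insertNth_apply_succAbove, Fin.insertNth_apply_succAbove]
      exact abs_sub_comm _ _
    rcases Nat.eq_or_lt_of_le hc3 with hc4 | hc4
    ·
      -- so j + 1 = N + Q, both still in B? no: j+1 = N+Q is in B. handled above needs <.
      -- this case: j+1 = N+Q, j ≥ N+1: same as within-layer
      rw [hB j (by omega) (by omega), hB (j+1) (by omega) (by omega)]
      rw [Fin.sum_univ_succAbove _ p]
      rw [Fin.insertNth_apply_same, Fin.insertNth_apply_same, sub_self, abs_zero, zero_add]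
      have e1 : N + Q + 1 - j = (N + Q - j) + 1 := by omega
      have e2 : N + Q + 1 - (j + 1) = N + Q - j := by omega
      rw [e1, e2]
      have := gadj (N + Q - j) (by omega) (by omega)
      rw [← this]
      refine Finset.sum_congr rfl fun i _ => ?_
      rw [Fin.insertNth_apply_succAbove, Fin.insertNth_apply_succAbove]
      exact abs_sub_comm _ _
    rcases Nat.eq_or_lt_of_le hc4 with hc5 | hc5
    · -- j = N + Q
      have hjNQ : j = N + Q := by omega
      rw [hB j (by omega) (by omega), hC (j+1) (by omega)]
      rw [show N + Q + 1 - j = 1 by omega, show j + 1 - (N + Q) = 1 by omega]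
      rw [Fin.sum_univ_succAbove _ p]
      rw [Fin.insertNth_apply_same, Fin.insertNth_apply_same]
      simp only [Fin.insertNth_apply_succAbove]
      push_cast
      simp
    · -- j > N + Q : within layer C
      rw [hC j (by omega), hC (j+1) (by omega)]
      rw [Fin.sum_univ_succAbove _ p]
      rw [Fin.insertNth_apply_same, Fin.insertNth_apply_same, sub_self, abs_zero, zero_add]
      rw [show j + 1 - (N + Q) = (j - (N + Q)) + 1 by omega]
      have := gadj (j - (N + Q)) (by omega) (by omega)
      rw [← this]
      refine Finset.sum_congr rfl fun i _ => ?_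
      rw [Fin.insertNth_apply_succAbove, Fin.insertNth_apply_succAbove]
  · -- start
    rw [hA 1 hNpos, hstart]
  · -- end
    rw [hprodM, hC (N + 2 * Q) (by omega)]
    rw [show N + 2 * Q - (N + Q) = Q by omega, gend]
    rw [hMdef]
    have hrm : p.removeNth m = m' := rfl
    rw [← hrm]
    exact Fin.insertNth_removeNth p (m p + 2) m
  · -- agreement
    rintro j ⟨hj1, hj2⟩
    exact hA j hj2
end

section
/- Let d ≥ 1 and r = (r_1,…,r_d) ∈ (0,∞)^d. For α > 0 and k ∈ ℕ^d define ψ_k^α(x) = (2^{d/2}/(α^{d/2}√(∏_{i=1}^d r_i))) ∏_{i=1}^d sin(k_i π x_i / (α r_i)) on the open box B_α = (0, α r_1)×⋯×(0, α r_d), and for i ∈ {1,…,d} let f_i(k) ∈ ℕ^d be obtained from k by adding 1 to its i-th component. Let Z : ℝ^d → ℝ be measurable, essentially bounded on some neighborhood of the origin, and (Fréchet) differentiable at the origin with ∂_i Z(0) ≠ 0 for every i = 1,…,d. Then there exists α_0 > 0 such that for every α ∈ (0, α_0), every k ∈ ℕ^d and every i ∈ {1,…,d}, ∫_{B_α} Z(x)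 ψ_k^α(x) ψ_{f_i(k)}^α(x) dx ≠ 0. -/
open MeasureTheory Real intervalIntegral

lemma ii_cos (c a b : ℝ) : IntervalIntegrable (fun t => Real.cos (c*t)) MeasureTheory.volume a b := by
  apply Continuous.intervalIntegrable; continuity

lemma ii_mul_cos (c a b : ℝ) : IntervalIntegrable (fun t => t * Real.cos (c*t)) MeasureTheory.volume a b := by
  apply Continuous.intervalIntegrable; continuity

lemma myint_cos (c L : ℝ) (hc : c ≠ 0) :
    ∫ t in (0:ℝ)..L, Real.cos (c*t) = Real.sin (c*L)/c := by
  have : ∀ t ∈ Set.uIcc (0:ℝ) L, HasDerivAt (fun u => Real.sin (c*u)/c) (Real.cos (c*t)) t := by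
    intro t _
    have h1 : HasDerivAt (fun u : ℝ => c*u) c t := by
      simpa using (hasDerivAt_id t).const_mul c
    have := ((Real.hasDerivAt_sin (c*t)).comp t h1).div_const c
    simpa [mul_comm, mul_div_assoc, mul_div_cancel_left₀ _ hc] using this
  rw [integral_eq_sub_of_hasDerivAt this (ii_cos c 0 L)]
  simp

lemma myint_mul_cos (c L : ℝ) (hc : c ≠ 0) :
    ∫ t in (0:ℝ)..L, t * Real.cos (c*t)
      = L * Real.sin (c*L)/c + Real.cos (c*L)/c^2 - 1/c^2 := by
  have : ∀ t ∈ Set.uIcc (0:ℝ) L, HasDerivAt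
      (fun u => u * Real.sin (c*u)/c + Real.cos (c*u)/c^2) (t * Real.cos (c*t)) t := by
    intro t _
    have h1 : HasDerivAt (fun u : ℝ => c*u) c t := by
      simpa using (hasDerivAt_id t).const_mul c
    have hs : HasDerivAt (fun u => Real.sin (c*u)) (Real.cos (c*t) * c) t :=
      (Real.hasDerivAt_sin (c*t)).comp t h1
    have hcc : HasDerivAt (fun u => Real.cos (c*u)) (-Real.sin (c*t) * c) t :=
      (Real.hasDerivAt_cos (c*t)).comp t h1
    have := ((((hasDerivAt_id t).mul hs).div_const c).add (hcc.div_const (c^2)))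
    refine HasDerivAt.congr_deriv this ?_
    field_simp
    simp only [id]
    ring
  rw [integral_eq_sub_of_hasDerivAt this (ii_mul_cos c 0 L)]
  simp

lemma cos_odd_pi (k : ℕ) : Real.cos ((2*(k:ℝ)+1) * π) = -1 := by
  have := Real.cos_nat_mul_two_pi_add_pi k
  convert this using 2
  ring

lemma sin_odd_pi (k : ℕ) : Real.sin ((2*(k:ℝ)+1) * π) = 0 := by
  have := Real.sin_nat_mul_pi (2*k+1)
  convert this using 2
  push_cast
  ring

-- ∫_0^L sin(kπt/L) sin((k+1)πt/L) dt = 0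
lemma int_sinsin (L : ℝ) (hL : 0 < L) (k : ℕ) :
    ∫ t in (0:ℝ)..L, Real.sin ((k:ℝ)*π*t/L) * Real.sin (((k:ℝ)+1)*π*t/L) = 0 := by
  have hπ := Real.pi_ne_zero
  have hL' := hL.ne'
  have key : ∀ t : ℝ, Real.sin ((k:ℝ)*π*t/L) * Real.sin (((k:ℝ)+1)*π*t/L)
      = (Real.cos ((π/L)*t) - Real.cos (((2*(k:ℝ)+1)*π/L)*t)) / 2 := by
    intro t
    have := Real.cos_sub_cos ((π/L)*t) (((2*(k:ℝ)+1)*π/L)*t)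
    rw [this]
    have e1 : ((π/L)*t + ((2*(k:ℝ)+1)*π/L)*t)/2 = ((k:ℝ)+1)*π*t/L := by field_simp; ring
    have e2 : ((π/L)*t - ((2*(k:ℝ)+1)*π/L)*t)/2 = -((k:ℝ)*π*t/L) := by field_simp; ring
    rw [e1, e2, Real.sin_neg]
    ring
  simp_rw [key]
  rw [intervalIntegral.integral_div]
  rw [intervalIntegral.integral_sub (ii_cos _ _ _) (ii_cos _ _ _)]
  rw [myint_cos _ _ (by positivity), myint_cos _ _ (by positivity)]
  have e1 : (π/L)*L = π := by field_simp
  have e2 : ((2*(k:ℝ)+1)*π/L)*L = (2*(k:ℝ)+1)*π := by field_simp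
  rw [e1, e2, Real.sin_pi, sin_odd_pi]
  simp

lemma ii_sinsin (a b c e : ℝ) :
    IntervalIntegrable (fun t => Real.sin (a*t) * Real.sin (b*t)) MeasureTheory.volume c e := by
  apply Continuous.intervalIntegrable; continuity

-- ∫_0^L t sin(kπt/L) sin((k+1)πt/L) dt
lemma int_t_sinsin (L : ℝ) (hL : 0 < L) (k : ℕ) :
    ∫ t in (0:ℝ)..L, t * (Real.sin ((k:ℝ)*π*t/L) * Real.sin (((k:ℝ)+1)*π*t/L))
      = -(4*(k:ℝ)*((k:ℝ)+1)*L^2) / ((2*(k:ℝ)+1)^2*π^2) := by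
  have hπ := Real.pi_ne_zero
  have hL' := hL.ne'
  have h2k : (2*(k:ℝ)+1) ≠ 0 := by positivity
  have key : ∀ t : ℝ, t * (Real.sin ((k:ℝ)*π*t/L) * Real.sin (((k:ℝ)+1)*π*t/L))
      = (t * Real.cos ((π/L)*t) - t * Real.cos (((2*(k:ℝ)+1)*π/L)*t)) / 2 := by
    intro t
    have := Real.cos_sub_cos ((π/L)*t) (((2*(k:ℝ)+1)*π/L)*t)
    have e1 : ((π/L)*t + ((2*(k:ℝ)+1)*π/L)*t)/2 = ((k:ℝ)+1)*π*t/L := by field_simp; ring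
    have e2 : ((π/L)*t - ((2*(k:ℝ)+1)*π/L)*t)/2 = -((k:ℝ)*π*t/L) := by field_simp; ring
    rw [e1, e2, Real.sin_neg] at this
    rw [show t * Real.cos ((π/L)*t) - t * Real.cos (((2*(k:ℝ)+1)*π/L)*t)
      = t * (Real.cos ((π/L)*t) - Real.cos (((2*(k:ℝ)+1)*π/L)*t)) by ring, this]
    ring
  simp_rw [key]
  rw [intervalIntegral.integral_div,
    intervalIntegral.integral_sub (ii_mul_cos _ _ _) (ii_mul_cos _ _ _),
    myint_mul_cos _ _ (by positivity), myint_mul_cos _ _ (by positivity)]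
  have e1 : (π/L)*L = π := by field_simp
  have e2 : ((2*(k:ℝ)+1)*π/L)*L = (2*(k:ℝ)+1)*π := by field_simp
  rw [e1, e2, Real.sin_pi, Real.cos_pi, sin_odd_pi, cos_odd_pi]
  field_simp
  ring

-- ∫_0^L sin(kπt/L)^2 dt = L/2
lemma int_sinsq (L : ℝ) (hL : 0 < L) (k : ℕ) (hk : 1 ≤ k) :
    ∫ t in (0:ℝ)..L, Real.sin ((k:ℝ)*π*t/L) ^ 2 = L/2 := by
  have hπ := Real.pi_ne_zero
  have hL' := hL.ne'
  have hk' : (k:ℝ) ≠ 0 := Nat.cast_ne_zero.mpr (by omega)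
  have key : ∀ t : ℝ, Real.sin ((k:ℝ)*π*t/L) ^ 2
      = (1 - Real.cos ((2*(k:ℝ)*π/L)*t)) / 2 := by
    intro t
    have h1 := Real.sin_sq_eq_half_sub ((k:ℝ)*π*t/L)
    have e : 2 * ((k:ℝ)*π*t/L) = (2*(k:ℝ)*π/L)*t := by field_simp
    rw [e] at h1
    rw [h1]; ring
  simp_rw [key]
  rw [intervalIntegral.integral_div,
    intervalIntegral.integral_sub (intervalIntegrable_const) (ii_cos _ _ _),
    myint_cos _ _ (by positivity)]
  have e2 : (2*(k:ℝ)*π/L)*L = (k:ℝ)*(2*π) := by field_simp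
  rw [e2]
  rw [show Real.sin ((k:ℝ)*(2*π)) = 0 by
    have := Real.sin_nat_mul_pi (2*k); push_cast at this; rw [← this]; ring_nf]
  simp

lemma pi_factor {d : ℕ} (A : Fin d → Set ℝ) (hA : ∀ j, MeasurableSet (A j))
    (g : Fin d → ℝ → ℝ) :
    ∫ x in Set.univ.pi A, ∏ j, g j (x j) = ∏ j, ∫ t in A j, g j t := by
  rw [← MeasureTheory.integral_indicator (MeasurableSet.univ_pi hA)]
  have h : (Set.univ.pi A).indicator (fun x => ∏ j, g j (x j))
      = fun x => ∏ j, (A j).indicator (g j) (x j) := by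
    ext x
    by_cases h : x ∈ Set.univ.pi A
    · rw [Set.indicator_of_mem h]
      exact Finset.prod_congr rfl fun j _ =>
        (Set.indicator_of_mem (h j (Set.mem_univ j)) _).symm
    · rw [Set.indicator_of_notMem h]
      obtain ⟨j, hj⟩ : ∃ j, x j ∉ A j := by simpa [Set.mem_pi] using h
      exact (Finset.prod_eq_zero (Finset.mem_univ j)
        (Set.indicator_of_notMem hj _)).symm
  rw [h]
  beta_reduce
  rw [volume_pi, MeasureTheory.integral_fintype_prod_eq_prod (ι := Fin d)
    (fun j => (A j).indicator (g j))]
  exact Finset.prod_congr rfl fun j _ => integral_indicator (hA j)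


lemma numeric_low (m cc rr Li Q α u : ℝ) (hm : 0 < m) (hmle : m ≤ rr * cc) (hk1 : 1 ≤ u)
    (hQ : 0 < Q) (hα : 0 < α) (hLi : Li = α * rr) (hrr : 0 < rr) :
    8*m*(Li*Q*α/(9*π^2)) ≤ cc * (4*u*(u+1)*Li^2/((2*u+1)^2*π^2)*Q) := by
  have hπ := Real.pi_pos
  have hLi' : 0 < Li := by rw [hLi]; positivity
  have hcc : 0 < cc := by nlinarith
  have inner : 8*m*(2*u+1)^2 ≤ 36*(rr*cc)*u*(u+1) := by
    nlinarith [mul_nonneg hm.le (mul_nonneg (sub_nonneg.mpr hk1) (by linarith : (0:ℝ) ≤ u + 2)),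
      mul_le_mul_of_nonneg_right hmle (by positivity : (0:ℝ) ≤ u*(u+1))]
  rw [show (8:ℝ)*m*(Li*Q*α/(9*π^2)) = (8*m*(2*u+1)^2) * (Li*Q*α) / (9*(2*u+1)^2*π^2) by
    field_simp]
  rw [show cc * (4*u*(u+1)*Li^2/((2*u+1)^2*π^2)*Q) = (36*(rr*cc)*u*(u+1)) * (Li*Q*α) / (9*(2*u+1)^2*π^2) by
    rw [hLi]; field_simp; ring]
  have h9 : (0:ℝ) < 9*(2*u+1)^2*π^2 := by positivity
  apply div_le_div_of_nonneg_right ?_ h9.le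
  have hA : (0:ℝ) ≤ Li*Q*α := by positivity
  calc (8*m*(2*u+1)^2) * (Li*Q*α) ≤ (36*(rr*cc)*u*(u+1)) * (Li*Q*α) :=
        mul_le_mul_of_nonneg_right inner hA


lemma numeric_heq (m B α Li Q : ℝ) (d : ℕ) (hB : B ≠ 0) :
    (4*m/(9*Real.pi^2*B*2^(d-1))) * (α*B) * (Li * ((2:ℝ)^(d-1)*Q))
      = 4*m*(Li*Q*α/(9*Real.pi^2)) := by
  have hπ : Real.pi ≠ 0 := Real.pi_ne_zero
  have h2d : ((2:ℝ))^(d-1) ≠ 0 := pow_ne_zero _ two_ne_zero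
  field_simp

/-- The normalized Dirichlet eigenfunctions of the Laplacian on the scaled orthotope
`(0, α r_1) × ⋯ × (0, α r_d)`. -/
noncomputable def psiA (d : ℕ) (r : Fin d → ℝ) (α : ℝ) (k : Fin d → ℕ)
    (x : Fin d → ℝ) : ℝ :=
  (2 : ℝ) ^ ((d : ℝ) / 2) / (α ^ ((d : ℝ) / 2) * Real.sqrt (∏ i, r i)) *
    ∏ i, Real.sin (k i * Real.pi * x i / (α * r i))

set_option maxHeartbeats 1000000 in
/-- If `Z` is measurable, essentially bounded near `0`, differentiable at `0` with all
partial derivatives nonzero, then for all sufficiently small `α > 0` the integrals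
`∫_{B_α} Z ψ_k^α ψ_{f_i(k)}^α` are nonzero for every `k ∈ ℕ^d` and every coordinate `i`. -/
theorem stmt6 (d : ℕ) (hd : 1 ≤ d) (r : Fin d → ℝ) (hr : ∀ i, 0 < r i)
    (Z : (Fin d → ℝ) → ℝ) (hZmeas : Measurable Z)
    (hZbdd : ∃ U ∈ nhds (0 : Fin d → ℝ), ∃ C : ℝ, ∀ᵐ x ∂volume, x ∈ U → |Z x| ≤ C)
    (hZdiff : DifferentiableAt ℝ Z 0)
    (hZgrad : ∀ i : Fin d, fderiv ℝ Z 0 (Pi.single i 1) ≠ 0) :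
    ∃ α₀ > 0, ∀ α : ℝ, 0 < α → α < α₀ →
      ∀ k : Fin d → ℕ, (∀ i, 1 ≤ k i) → ∀ i : Fin d,
        (∫ x in Set.univ.pi fun j => Set.Ioo 0 (α * r j),
            Z x * psiA d r α k x * psiA d r α (Function.update k i (k i + 1)) x) ≠ 0 := by
  classical
  have hne : Nonempty (Fin d) := ⟨⟨0, hd⟩⟩
  have hπ : (0:ℝ) < π := Real.pi_pos
  set φ := fderiv ℝ Z 0 with hφdef
  set c : Fin d → ℝ := fun j => φ (Pi.single j 1) with hcdef
  have hc : ∀ j, c j ≠ 0 := hZgrad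
  set B : ℝ := ∑ j, r j with hBdef
  have hB : 0 < B := Finset.sum_pos (fun j _ => hr j) Finset.univ_nonempty
  have hrB : ∀ j, r j ≤ B := fun j =>
    Finset.single_le_sum (fun m _ => (hr m).le) (Finset.mem_univ j)
  set m : ℝ := Finset.univ.inf' Finset.univ_nonempty (fun j => r j * |c j|) with hmdef
  have hm : 0 < m := by
    rw [hmdef, Finset.lt_inf'_iff]
    intro j _
    exact mul_pos (hr j) (abs_pos.mpr (hc j))
  have hmle : ∀ j, m ≤ r j * |c j| := fun j => Finset.inf'_le _ (Finset.mem_univ j)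
  set ε : ℝ := 4 * m / (9 * π^2 * B * 2^(d-1)) with hεdef
  have hε : 0 < ε := by positivity
  -- remainder estimate from differentiability
  have hφx : ∀ x : Fin d → ℝ, φ x = ∑ j, x j * c j := by
    intro x
    have hx : x = ∑ j, x j • (Pi.single j (1:ℝ) : Fin d → ℝ) := by
      ext mm
      simp [Pi.single_apply, Finset.sum_ite_eq]
    conv_lhs => rw [hx]
    rw [map_sum]
    exact Finset.sum_congr rfl fun j _ => by rw [φ.map_smul]; rfl
  obtain ⟨δ, hδpos, hδ⟩ : ∃ δ > 0, ∀ x : Fin d → ℝ, ‖x‖ < δ → |Z x - Z 0 - φ x| ≤ ε * ‖x‖ := by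
    have hlo := hasFDerivAt_iff_isLittleO_nhds_zero.mp hZdiff.hasFDerivAt
    simp only [zero_add] at hlo
    have h2 := Metric.eventually_nhds_iff.mp (hlo.def hε)
    obtain ⟨δ, hδpos, hδ⟩ := h2
    exact ⟨δ, hδpos, fun x hx => by
      have := hδ (y := x) (by simpa [dist_eq_norm] using hx)
      simpa [Real.norm_eq_abs] using this⟩
  refine ⟨δ / B, by positivity, ?_⟩
  intro α hα hαδ k hk i
  set L : Fin d → ℝ := fun j => α * r j with hLdef
  have hL : ∀ j, 0 < L j := fun j => mul_pos hα (hr j)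
  set S : Set (Fin d → ℝ) := Set.univ.pi fun j => Set.Ioo 0 (L j) with hSdef
  have hSm : MeasurableSet S := MeasurableSet.univ_pi fun j => measurableSet_Ioo
  set k' : Fin d → ℕ := Function.update k i (k i + 1) with hk'def
  set N : ℝ := (2 : ℝ) ^ ((d : ℝ) / 2) / (α ^ ((d : ℝ) / 2) * Real.sqrt (∏ j, r j)) with hNdef
  have hN : 0 < N := by
    apply div_pos (Real.rpow_pos_of_pos two_pos _)
    exact mul_pos (Real.rpow_pos_of_pos hα _)
      (Real.sqrt_pos.mpr (Finset.prod_pos fun j _ => hr j))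
  set g : Fin d → ℝ → ℝ := fun j t =>
    Real.sin ((k j : ℝ) * π * t / (α * r j)) * Real.sin ((k' j : ℝ) * π * t / (α * r j))
    with hgdef
  set W : (Fin d → ℝ) → ℝ := fun x => ∏ j, g j (x j) with hWdef
  have hpsi : ∀ x, Z x * psiA d r α k x * psiA d r α k' x = N ^ 2 * (Z x * W x) := by
    intro x
    simp only [psiA, hWdef, hgdef, hNdef]
    rw [Finset.prod_mul_distrib]
    ring
  simp only [hpsi]
  rw [MeasureTheory.integral_const_mul]
  apply mul_ne_zero (by positivity)
  -- per-coordinate integrals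
  have hki' : (k' i : ℝ) = (k i : ℝ) + 1 := by
    simp [hk'def, Function.update_self]
  have hkj' : ∀ j, j ≠ i → k' j = k j := fun j hj => Function.update_of_ne hj _ _
  have hconv : ∀ (LL : ℝ), 0 < LL → ∀ f : ℝ → ℝ,
      (∫ t in Set.Ioo (0:ℝ) LL, f t) = ∫ t in (0:ℝ)..LL, f t := by
    intro LL hLL f
    rw [intervalIntegral.integral_of_le hLL.le, MeasureTheory.integral_Ioc_eq_integral_Ioo]
  have hgi : (∫ t in Set.Ioo 0 (L i), g i t) = 0 := by
    rw [hconv _ (hL i)]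
    simp only [hgdef, hki']
    exact int_sinsin (L i) (hL i) (k i)
  have hgj : ∀ j, j ≠ i → (∫ t in Set.Ioo 0 (L j), g j t) = L j / 2 := by
    intro j hj
    rw [hconv _ (hL j)]
    simp only [hgdef, hkj' j hj]
    have := int_sinsq (L j) (hL j) (k j) (hk j)
    rw [← this]
    apply intervalIntegral.integral_congr
    intro t _
    simp [sq, hLdef]
  have hgit : (∫ t in Set.Ioo 0 (L i), t * g i t)
      = -(4*(k i : ℝ)*((k i : ℝ)+1)*(L i)^2) / ((2*(k i : ℝ)+1)^2*π^2) := by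
    rw [hconv _ (hL i)]
    simp only [hgdef, hki']
    exact int_t_sinsin (L i) (hL i) (k i)
  -- basic bounds
  have hαB : α * B < δ := by
    calc α * B < (δ / B) * B := by exact mul_lt_mul_of_pos_right hαδ hB
    _ = δ := by field_simp
  have hxS : ∀ x ∈ S, ‖x‖ ≤ α * B := by
    intro x hx
    rw [pi_norm_le_iff_of_nonneg (by positivity)]
    intro j
    have hxj := hx j (Set.mem_univ j)
    simp only [Set.mem_Ioo] at hxj
    rw [Real.norm_eq_abs, abs_of_pos hxj.1]
    calc x j ≤ L j := hxj.2.le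
    _ = α * r j := rfl
    _ ≤ α * B := by nlinarith [hrB j]
  have hsin1 : ∀ z : ℝ, |Real.sin z| ≤ 1 := fun z =>
    abs_le.mpr ⟨Real.neg_one_le_sin z, Real.sin_le_one z⟩
  have hg1 : ∀ j t, |g j t| ≤ 1 := by
    intro j t
    rw [hgdef, abs_mul]
    exact mul_le_one₀ (hsin1 _) (abs_nonneg _) (hsin1 _)
  have hW1 : ∀ x, |W x| ≤ 1 := by
    intro x
    rw [hWdef, Finset.abs_prod]
    exact Finset.prod_le_one (fun j _ => abs_nonneg _) (fun j _ => hg1 j (x j))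
  have hWcont : Continuous W := by
    apply continuous_finset_prod
    intro j _
    simp only [hgdef]
    fun_prop
  have hvolS : volume S = ∏ j, ENNReal.ofReal (L j) := by
    rw [hSdef, volume_pi_pi]
    simp [Real.volume_Ioo]
  have hvolS_lt : volume S < ⊤ := by
    rw [hvolS]
    exact ENNReal.prod_lt_top (fun j _ => ENNReal.ofReal_lt_top)
  have hvolSreal : (volume S).toReal = ∏ j, L j := by
    rw [hvolS, ENNReal.toReal_prod]
    exact Finset.prod_congr rfl fun j _ => ENNReal.toReal_ofReal (hL j).le
  have hIntOn : ∀ f : (Fin d → ℝ) → ℝ, Measurable f → (∃ C, ∀ x ∈ S, |f x| ≤ C) →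
      IntegrableOn f S := by
    rintro f hf ⟨C, hC⟩
    apply Measure.integrableOn_of_bounded hvolS_lt.ne hf.aestronglyMeasurable (M := C)
    rw [ae_restrict_iff' hSm]
    exact Filter.Eventually.of_forall fun x hx => by
      rw [Real.norm_eq_abs]; exact hC x hx
  -- remainder
  set R : (Fin d → ℝ) → ℝ := fun x => Z x - Z 0 - φ x with hRdef
  have hRmeas : Measurable R := by
    apply Measurable.sub (hZmeas.sub measurable_const)
    exact φ.continuous.measurable
  have hRS : ∀ x ∈ S, |R x| ≤ ε * (α * B) := by
    intro x hx
    have h1 : ‖x‖ < δ := lt_of_le_of_lt (hxS x hx) hαB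
    calc |R x| ≤ ε * ‖x‖ := hδ x h1
    _ ≤ ε * (α * B) := by nlinarith [hxS x hx, norm_nonneg x]
  -- integrability of pieces
  have hI1 : IntegrableOn (fun x => Z 0 * W x) S := by
    apply hIntOn _ (measurable_const.mul hWcont.measurable)
    exact ⟨|Z 0|, fun x hx => by
      simp only [Pi.mul_apply]
      rw [abs_mul]
      nlinarith [hW1 x, abs_nonneg (Z 0), abs_nonneg (W x)]⟩
  have hIxW : ∀ j, IntegrableOn (fun x : Fin d → ℝ => x j * W x) S := by
    intro j
    apply hIntOn _ ((measurable_pi_apply j).mul hWcont.measurable)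
    refine ⟨α * B, fun x hx => ?_⟩
    simp only [Pi.mul_apply]
    rw [abs_mul]
    have h1 : |x j| ≤ α * B := by
      have := hxS x hx
      rw [pi_norm_le_iff_of_nonneg (by positivity)] at this
      simpa [Real.norm_eq_abs] using this j
    nlinarith [hW1 x, abs_nonneg (x j), abs_nonneg (W x)]
  have hI2 : ∀ j, IntegrableOn (fun x : Fin d → ℝ => c j * (x j * W x)) S :=
    fun j => (hIxW j).const_mul _
  have hI2' : IntegrableOn (fun x : Fin d → ℝ => ∑ j, c j * (x j * W x)) S :=
    MeasureTheory.integrable_finset_sum _ fun j _ => hI2 j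
  have hI3 : IntegrableOn (fun x => R x * W x) S := by
    apply hIntOn _ (hRmeas.mul hWcont.measurable)
    refine ⟨ε * (α * B), fun x hx => ?_⟩
    rw [Pi.mul_apply, abs_mul]
    nlinarith [hW1 x, hRS x hx, abs_nonneg (R x), abs_nonneg (W x)]
  -- splitting
  have hsplit : ∀ x, Z x * W x = Z 0 * W x + (∑ j, c j * (x j * W x)) + R x * W x := by
    intro x
    have h1 : (∑ j, c j * (x j * W x)) = (∑ j, x j * c j) * W x := by
      rw [Finset.sum_mul]
      exact Finset.sum_congr rfl fun j _ => by ring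
    rw [h1, ← hφx x, hRdef]
    ring
  rw [show (fun x => Z x * W x) = fun x => Z 0 * W x + (∑ j, c j * (x j * W x)) + R x * W x
    from funext hsplit]
  have hI12 : IntegrableOn (fun x : Fin d → ℝ =>
      Z 0 * W x + ∑ j, c j * (x j * W x)) S := hI1.add hI2'
  rw [integral_add hI12 hI3, integral_add hI1 hI2']
  -- evaluate the pieces
  have hT0 : (∫ x in S, W x) = 0 := by
    have := pi_factor (fun j => Set.Ioo 0 (L j)) (fun j => measurableSet_Ioo) g
    rw [hSdef, hWdef]
    rw [this]
    exact Finset.prod_eq_zero (Finset.mem_univ i) hgi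
  have h1 : (∫ x in S, Z 0 * W x) = 0 := by rw [MeasureTheory.integral_const_mul, hT0, mul_zero]
  have hprodform : ∀ j, (fun x : Fin d → ℝ => x j * W x)
      = fun x => ∏ mm, ((if mm = j then x mm else 1) * g mm (x mm)) := by
    intro j
    ext x
    rw [Finset.prod_mul_distrib, Finset.prod_ite_eq' Finset.univ j (fun mm => x mm)]
    simp [hWdef]
  have hMfact : ∀ j, (∫ x in S, x j * W x)
      = ∏ mm, ∫ t in Set.Ioo 0 (L mm), (if mm = j then t else 1) * g mm t := by
    intro j
    rw [hprodform j, hSdef]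
    exact pi_factor (fun j => Set.Ioo 0 (L j)) (fun j => measurableSet_Ioo)
      (fun mm t => (if mm = j then t else 1) * g mm t)
  have hMzero : ∀ j, j ≠ i → (∫ x in S, x j * W x) = 0 := by
    intro j hj
    rw [hMfact j]
    apply Finset.prod_eq_zero (Finset.mem_univ i)
    have : ∀ t : ℝ, (if i = j then t else 1) * g i t = g i t := by
      intro t; rw [if_neg (fun h => hj h.symm), one_mul]
    simp_rw [this]
    exact hgi
  set Q : ℝ := ∏ mm ∈ Finset.univ.erase i, (L mm / 2) with hQdef
  have hQ : 0 < Q := Finset.prod_pos fun mm _ => half_pos (hL mm)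
  have hMi : (∫ x in S, x i * W x)
      = -(4*(k i : ℝ)*((k i : ℝ)+1)*(L i)^2) / ((2*(k i : ℝ)+1)^2*π^2) * Q := by
    rw [hMfact i]
    rw [← Finset.mul_prod_erase Finset.univ _ (Finset.mem_univ i)]
    have hfaci : (∫ t in Set.Ioo 0 (L i), (if i = i then t else 1) * g i t)
        = -(4*(k i : ℝ)*((k i : ℝ)+1)*(L i)^2) / ((2*(k i : ℝ)+1)^2*π^2) := by
      simp only [if_pos rfl]
      exact hgit
    rw [hfaci, hQdef]
    congr 1
    apply Finset.prod_congr rfl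
    intro mm hmm
    have hmi : mm ≠ i := (Finset.mem_erase.mp hmm).1
    have : ∀ t : ℝ, (if mm = i then t else 1) * g mm t = g mm t := by
      intro t; rw [if_neg hmi, one_mul]
    simp_rw [this]
    exact hgj mm hmi
  have h2 : (∫ x in S, ∑ j, c j * (x j * W x))
      = c i * (-(4*(k i : ℝ)*((k i : ℝ)+1)*(L i)^2) / ((2*(k i : ℝ)+1)^2*π^2) * Q) := by
    rw [integral_finset_sum _ (fun j _ => hI2 j)]
    rw [Finset.sum_eq_single i]
    · rw [MeasureTheory.integral_const_mul, hMi]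
    · intro j _ hj
      rw [MeasureTheory.integral_const_mul, hMzero j hj, mul_zero]
    · intro h; exact absurd (Finset.mem_univ i) h
  rw [h1, h2, zero_add]
  -- the error bound
  set E : ℝ := ∫ x in S, R x * W x with hEdef
  have hEbound : |E| ≤ ε * (α * B) * ∏ j, L j := by
    have hb : ∀ x ∈ S, ‖R x * W x‖ ≤ ε * (α * B) := by
      intro x hx
      rw [Real.norm_eq_abs, abs_mul]
      nlinarith [hW1 x, hRS x hx, abs_nonneg (R x), abs_nonneg (W x)]
    have := MeasureTheory.norm_setIntegral_le_of_norm_le_const hvolS_lt hb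
    rw [measureReal_def, hvolSreal, Real.norm_eq_abs] at this
    exact this
  -- numeric conclusion
  have hprodL : (∏ j, L j) = L i * ((2:ℝ)^(d-1) * Q) := by
    rw [← Finset.mul_prod_erase Finset.univ L (Finset.mem_univ i)]
    congr 1
    have : ∀ mm ∈ Finset.univ.erase i, L mm = 2 * (L mm / 2) := by
      intro mm _; ring
    rw [Finset.prod_congr rfl this, Finset.prod_mul_distrib, Finset.prod_const,
      Finset.card_erase_of_mem (Finset.mem_univ i), Finset.card_univ, Fintype.card_fin]
  set Mi : ℝ := -(4*(k i : ℝ)*((k i : ℝ)+1)*(L i)^2) / ((2*(k i : ℝ)+1)^2*π^2) * Q with hMidef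
  have hk1 : (1:ℝ) ≤ (k i : ℝ) := by exact_mod_cast hk i
  set P : ℝ := L i * Q * α / (9*π^2) with hPdef
  have hP : 0 < P := by
    rw [hPdef]
    exact div_pos (mul_pos (mul_pos (hL i) hQ) hα) (by positivity)
  have hup : |E| ≤ 4*m*P := by
    have heq : ε * (α * B) * (∏ j, L j) = 4*m*P := by
      rw [hprodL, hεdef, hPdef]
      exact numeric_heq m B α (L i) Q d hB.ne'
    rw [← heq]
    exact hEbound
  have hMineg : Mi < 0 := by
    rw [hMidef]
    apply mul_neg_of_neg_of_pos _ hQ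
    apply div_neg_of_neg_of_pos
    · have h4 : (0:ℝ) < 4*(k i : ℝ)*((k i : ℝ)+1) := by nlinarith [hk1]
      have : (0:ℝ) < 4*(k i : ℝ)*((k i : ℝ)+1)*(L i)^2 :=
        mul_pos h4 (pow_pos (hL i) 2)
      linarith
    · positivity
  have hlow : 8*m*P ≤ |c i * Mi| := by
    have habs : |c i * Mi|
        = |c i| * (4*(k i : ℝ)*((k i : ℝ)+1)*(L i)^2/((2*(k i : ℝ)+1)^2*π^2)*Q) := by
      rw [abs_mul, abs_of_neg hMineg, hMidef]
      ring
    rw [habs, hPdef]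
    exact numeric_low m (|c i|) (r i) (L i) Q α ((k i : ℝ)) hm
      (le_of_le_of_eq (hmle i) (by ring)) hk1 hQ hα rfl (hr i)
  intro hTeq
  have hEMi : c i * Mi = -E := by linarith [hTeq]
  have hfin : |c i * Mi| ≤ 4*m*P := by rw [hEMi, abs_neg]; exact hup
  have := mul_pos hm hP
  linarith
end

section
/- Let d ≥ 1, let W : ℝ^d → ℝ be measurable, essentially bounded on every bounded subset of ℝ^d, and suppose there exist C > 0 and α > 0 with |W(x)| ≤ C e^{α‖x‖} for almost every x ∈ ℝ^d. Let α' > α and K > 0, and let (φ_n)_{n∈ℕ} and φ be real-valued functions in L²(ℝ^d) such that ∫_{ℝ^d} e^{α'‖x‖} φ_n(x)² dx ≤ K for every n, ∫_{ℝ^d} e^{α'‖x‖} φ(x)² dx ≤ K, and φ_n → φ in L²(ℝ^d). Then √(|W|) φ_n → √(|W|) φ in L²(ℝ^d), i.e. ∫_{ℝ^d} |W(x)| (φ_n(x) − φ(x))² dx → 0 as n → ∞. -/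
open MeasureTheory Filter
open scoped ENNReal

/-- If `|W| ≤ C e^{α‖x‖}`, `W` is essentially bounded on bounded sets, the functions
`φ_n, φ` satisfy uniform exponentially weighted bounds with weight `e^{α'‖x‖}`, `α' > α`,
and `φ_n → φ` in `L²`, then `√|W| φ_n → √|W| φ` in `L²`, i.e.
`∫ |W| (φ_n − φ)² → 0`. -/
theorem stmt12 (d : ℕ) (hd : 1 ≤ d)
    (W : EuclideanSpace ℝ (Fin d) → ℝ) (hWmeas : Measurable W)
    (hWloc : ∀ s : Set (EuclideanSpace ℝ (Fin d)), Bornology.IsBounded s →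
      ∃ C : ℝ, ∀ᵐ x ∂volume, x ∈ s → |W x| ≤ C)
    (C α : ℝ) (hC : 0 < C) (hα : 0 < α)
    (hW : ∀ᵐ x ∂volume, |W x| ≤ C * Real.exp (α * ‖x‖))
    (α' K : ℝ) (hα' : α < α') (hK : 0 < K)
    (φn : ℕ → EuclideanSpace ℝ (Fin d) → ℝ) (φ : EuclideanSpace ℝ (Fin d) → ℝ)
    (hφnmeas : ∀ n, Measurable (φn n)) (hφmeas : Measurable φ)
    (hbound : ∀ n, (∫⁻ x, ENNReal.ofReal (Real.exp (α' * ‖x‖) * (φn n x) ^ 2) ∂volume)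
      ≤ ENNReal.ofReal K)
    (hboundφ : (∫⁻ x, ENNReal.ofReal (Real.exp (α' * ‖x‖) * (φ x) ^ 2) ∂volume)
      ≤ ENNReal.ofReal K)
    (hconv : Tendsto (fun n => ∫⁻ x, ENNReal.ofReal ((φn n x - φ x) ^ 2) ∂volume)
      atTop (nhds 0)) :
    Tendsto (fun n => ∫⁻ x, ENNReal.ofReal (|W x| * (φn n x - φ x) ^ 2) ∂volume)
      atTop (nhds 0) := by
  have hδ : 0 < α' - α := sub_pos.mpr hα'
  rw [ENNReal.tendsto_nhds_zero]
  intro ε hε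
  obtain ⟨ε', hε'pos, hε'le⟩ : ∃ ε' : ℝ, 0 < ε' ∧ ENNReal.ofReal ε' ≤ ε := by
    rcases eq_or_ne ε ⊤ with h | h
    · exact ⟨1, one_pos, by simp [h]⟩
    · exact ⟨ε.toReal, ENNReal.toReal_pos hε.ne' h, (ENNReal.ofReal_toReal h).le⟩
  set R : ℝ := max 1 ((α' - α)⁻¹ * Real.log (8 * K * C / ε')) with hRdef
  have hR1 : (1:ℝ) ≤ R := le_max_left _ _
  have hR0 : 0 < R := lt_of_lt_of_le one_pos hR1
  set T : ℝ := C * Real.exp ((α - α') * R) with hTdef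
  have hT0 : 0 < T := mul_pos hC (Real.exp_pos _)
  -- tail smallness
  have hTtail : 4 * K * T ≤ ε' / 2 := by
    have h8 : (0:ℝ) < 8 * K * C / ε' := by positivity
    have hlog : Real.log (8 * K * C / ε') ≤ (α' - α) * R := by
      have h1 : (α' - α)⁻¹ * Real.log (8 * K * C / ε') ≤ R := le_max_right _ _
      have := mul_le_mul_of_nonneg_left h1 hδ.le
      calc Real.log (8 * K * C / ε')
          = (α' - α) * ((α' - α)⁻¹ * Real.log (8 * K * C / ε')) := by
            field_simp
        _ ≤ (α' - α) * R := this
    have hE : 8 * K * C / ε' ≤ Real.exp ((α' - α) * R) :=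
      (Real.log_le_iff_le_exp h8).mp hlog
    have hEpos : (0:ℝ) < Real.exp ((α' - α) * R) := Real.exp_pos _
    have hmulE : 8 * K * C ≤ ε' * Real.exp ((α' - α) * R) := by
      rw [div_le_iff₀ hε'pos] at hE
      linarith [hE]
    have hTeq : T * Real.exp ((α' - α) * R) = C := by
      rw [hTdef, mul_assoc, ← Real.exp_add]
      ring_nf
      simp
    nlinarith [mul_pos hK hT0, hEpos, mul_le_mul_of_nonneg_left hmulE hT0.le]
  -- local bound on the ball
  obtain ⟨C_R, hC_R⟩ := hWloc (Metric.closedBall 0 R) Metric.isBounded_closedBall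
  set M : ℝ := max C_R 0 with hMdef
  have hM0 : 0 ≤ M := le_max_right _ _
  have hMbd : ∀ᵐ x ∂volume, x ∈ Metric.closedBall (0 : EuclideanSpace ℝ (Fin d)) R →
      |W x| ≤ M := by
    filter_upwards [hC_R] with x hx hmem
    exact (hx hmem).trans (le_max_left _ _)
  -- eventual smallness of the L² distance
  have hsmall : (0:ℝ≥0∞) < ENNReal.ofReal (ε' / (2 * (M + 1))) :=
    ENNReal.ofReal_pos.mpr (by positivity)
  have hev := (ENNReal.tendsto_nhds_zero.mp hconv) _ hsmall
  filter_upwards [hev] with n hn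
  set s : Set (EuclideanSpace ℝ (Fin d)) := Metric.closedBall 0 R with hsdef
  have hsm : MeasurableSet s := measurableSet_closedBall
  have hsplit :
      (∫⁻ x in s, ENNReal.ofReal (|W x| * (φn n x - φ x) ^ 2) ∂volume) +
      (∫⁻ x in sᶜ, ENNReal.ofReal (|W x| * (φn n x - φ x) ^ 2) ∂volume) =
      ∫⁻ x, ENNReal.ofReal (|W x| * (φn n x - φ x) ^ 2) ∂volume :=
    lintegral_add_compl _ hsm
  rw [← hsplit]
  have hgmeas : Measurable fun x => ENNReal.ofReal ((φn n x - φ x) ^ 2) :=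
    (((hφnmeas n).sub hφmeas).pow_const 2).ennreal_ofReal
  -- ball part
  have hball :
      (∫⁻ x in s, ENNReal.ofReal (|W x| * (φn n x - φ x) ^ 2) ∂volume)
        ≤ ENNReal.ofReal (ε' / 2) := by
    have hae : ∀ᵐ x ∂(volume.restrict s),
        ENNReal.ofReal (|W x| * (φn n x - φ x) ^ 2)
          ≤ ENNReal.ofReal M * ENNReal.ofReal ((φn n x - φ x) ^ 2) := by
      filter_upwards [(ae_restrict_iff' hsm).mpr hMbd] with x hx
      rw [← ENNReal.ofReal_mul hM0]
      exact ENNReal.ofReal_le_ofReal (mul_le_mul_of_nonneg_right hx (sq_nonneg _))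
    calc (∫⁻ x in s, ENNReal.ofReal (|W x| * (φn n x - φ x) ^ 2) ∂volume)
        ≤ ∫⁻ x in s, ENNReal.ofReal M * ENNReal.ofReal ((φn n x - φ x) ^ 2) ∂volume :=
          lintegral_mono_ae hae
      _ = ENNReal.ofReal M * ∫⁻ x in s, ENNReal.ofReal ((φn n x - φ x) ^ 2) ∂volume :=
          lintegral_const_mul' _ _ ENNReal.ofReal_ne_top
      _ ≤ ENNReal.ofReal M * ∫⁻ x, ENNReal.ofReal ((φn n x - φ x) ^ 2) ∂volume :=
          mul_le_mul_right (setLIntegral_le_lintegral _ _) _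
      _ ≤ ENNReal.ofReal M * ENNReal.ofReal (ε' / (2 * (M + 1))) :=
          mul_le_mul_right hn _
      _ = ENNReal.ofReal (M * (ε' / (2 * (M + 1)))) := (ENNReal.ofReal_mul hM0).symm
      _ ≤ ENNReal.ofReal (ε' / 2) := by
          apply ENNReal.ofReal_le_ofReal
          rw [show M * (ε' / (2 * (M + 1))) = M * ε' / (2 * (M + 1)) by ring,
            div_le_div_iff₀ (by positivity) (by norm_num)]
          nlinarith [hε'pos, hM0]
  -- tail part
  have htail :
      (∫⁻ x in sᶜ, ENNReal.ofReal (|W x| * (φn n x - φ x) ^ 2) ∂volume)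
        ≤ ENNReal.ofReal (ε' / 2) := by
    have hae : ∀ᵐ x ∂(volume.restrict sᶜ),
        ENNReal.ofReal (|W x| * (φn n x - φ x) ^ 2)
          ≤ ENNReal.ofReal T *
            (2 * ENNReal.ofReal (Real.exp (α' * ‖x‖) * (φn n x) ^ 2) +
             2 * ENNReal.ofReal (Real.exp (α' * ‖x‖) * (φ x) ^ 2)) := by
      filter_upwards [ae_restrict_of_ae hW, ae_restrict_mem hsm.compl] with x hWx hmem
      have hRx : R ≤ ‖x‖ := by
        have : ¬ x ∈ Metric.closedBall (0 : EuclideanSpace ℝ (Fin d)) R := hmem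
        rw [Metric.mem_closedBall, dist_zero_right] at this
        linarith [not_le.mp this]
      have hexp : C * Real.exp (α * ‖x‖) ≤ T * Real.exp (α' * ‖x‖) := by
        rw [hTdef, mul_assoc, ← Real.exp_add]
        apply mul_le_mul_of_nonneg_left _ hC.le
        apply Real.exp_le_exp.mpr
        nlinarith [hδ]
      have hreal : |W x| * (φn n x - φ x) ^ 2
          ≤ T * (2 * (Real.exp (α' * ‖x‖) * (φn n x) ^ 2) +
                 2 * (Real.exp (α' * ‖x‖) * (φ x) ^ 2)) := by
        have hsq : (φn n x - φ x) ^ 2 ≤ 2 * (φn n x) ^ 2 + 2 * (φ x) ^ 2 := by nlinarith [sq_nonneg (φn n x + φ x)]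
        have h1 : |W x| * (φn n x - φ x) ^ 2 ≤ (T * Real.exp (α' * ‖x‖)) * (φn n x - φ x) ^ 2 :=
          mul_le_mul_of_nonneg_right (hWx.trans hexp) (sq_nonneg _)
        have h2 : (T * Real.exp (α' * ‖x‖)) * (φn n x - φ x) ^ 2
            ≤ (T * Real.exp (α' * ‖x‖)) * (2 * (φn n x) ^ 2 + 2 * (φ x) ^ 2) :=
          mul_le_mul_of_nonneg_left hsq (by positivity)
        calc |W x| * (φn n x - φ x) ^ 2
            ≤ (T * Real.exp (α' * ‖x‖)) * (2 * (φn n x) ^ 2 + 2 * (φ x) ^ 2) := h1.trans h2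
          _ = T * (2 * (Real.exp (α' * ‖x‖) * (φn n x) ^ 2) +
                 2 * (Real.exp (α' * ‖x‖) * (φ x) ^ 2)) := by ring
      calc ENNReal.ofReal (|W x| * (φn n x - φ x) ^ 2)
          ≤ ENNReal.ofReal (T * (2 * (Real.exp (α' * ‖x‖) * (φn n x) ^ 2) +
                 2 * (Real.exp (α' * ‖x‖) * (φ x) ^ 2))) := ENNReal.ofReal_le_ofReal hreal
        _ = ENNReal.ofReal T *
            (2 * ENNReal.ofReal (Real.exp (α' * ‖x‖) * (φn n x) ^ 2) +
             2 * ENNReal.ofReal (Real.exp (α' * ‖x‖) * (φ x) ^ 2)) := by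
            rw [ENNReal.ofReal_mul hT0.le, ENNReal.ofReal_add (by positivity) (by positivity),
              ENNReal.ofReal_mul (by norm_num : (0:ℝ) ≤ 2),
              ENNReal.ofReal_mul (by norm_num : (0:ℝ) ≤ 2)]
            norm_num
    have hmeas1 : Measurable fun x =>
        (2:ℝ≥0∞) * ENNReal.ofReal (Real.exp (α' * ‖x‖) * (φn n x) ^ 2) :=
      (((measurable_const.mul measurable_norm).exp.mul ((hφnmeas n).pow_const 2)).ennreal_ofReal).const_mul 2
    calc (∫⁻ x in sᶜ, ENNReal.ofReal (|W x| * (φn n x - φ x) ^ 2) ∂volume)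
        ≤ ∫⁻ x in sᶜ, ENNReal.ofReal T *
            (2 * ENNReal.ofReal (Real.exp (α' * ‖x‖) * (φn n x) ^ 2) +
             2 * ENNReal.ofReal (Real.exp (α' * ‖x‖) * (φ x) ^ 2)) ∂volume :=
          lintegral_mono_ae hae
      _ ≤ ∫⁻ x, ENNReal.ofReal T *
            (2 * ENNReal.ofReal (Real.exp (α' * ‖x‖) * (φn n x) ^ 2) +
             2 * ENNReal.ofReal (Real.exp (α' * ‖x‖) * (φ x) ^ 2)) ∂volume :=
          setLIntegral_le_lintegral _ _
      _ = ENNReal.ofReal T *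
            ((2 * ∫⁻ x, ENNReal.ofReal (Real.exp (α' * ‖x‖) * (φn n x) ^ 2) ∂volume) +
             (2 * ∫⁻ x, ENNReal.ofReal (Real.exp (α' * ‖x‖) * (φ x) ^ 2) ∂volume)) := by
          rw [lintegral_const_mul' _ _ ENNReal.ofReal_ne_top,
            lintegral_add_left hmeas1,
            lintegral_const_mul' (2:ℝ≥0∞) _ (by norm_num),
            lintegral_const_mul' (2:ℝ≥0∞) _ (by norm_num)]
      _ ≤ ENNReal.ofReal T * ((2 * ENNReal.ofReal K) + (2 * ENNReal.ofReal K)) :=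
          mul_le_mul_right (add_le_add (mul_le_mul_right (hbound n) 2)
            (mul_le_mul_right hboundφ 2)) _
      _ = ENNReal.ofReal (4 * K * T) := by
          rw [show (2 * ENNReal.ofReal K) + (2 * ENNReal.ofReal K) = 4 * ENNReal.ofReal K by ring,
            show (4:ℝ≥0∞) = ENNReal.ofReal 4 by norm_num,
            ← ENNReal.ofReal_mul (by norm_num : (0:ℝ) ≤ 4),
            ← ENNReal.ofReal_mul hT0.le]
          ring_nf
      _ ≤ ENNReal.ofReal (ε' / 2) := ENNReal.ofReal_le_ofReal hTtail
  calc _ ≤ ENNReal.ofReal (ε' / 2) + ENNReal.ofReal (ε' / 2) := add_le_add hball htail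
    _ = ENNReal.ofReal ε' := by
        rw [← ENNReal.ofReal_add (by positivity) (by positivity)]
        ring_nf
    _ ≤ ε := hε'le
end
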